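/- Let f : Λ → ℂ be discrete analytic on Λ. Then pointwise on Λ: (I+α₋δ_x)((I+α₊δ_y)f) = f and (I+α₊δ_y)((I+α₋δ_x)f) = f; (I+α₋δ_x)((I+α₋δ_y)f) = (I+δ_x)f; and (I+α₊δ_x)((I+α₊δ_y)f) = (I+δ_y)f. Moreover each of the six maps f ↦ (I+δ_x)f, f ↦ (I+δ_y)f, f ↦ (I+α₊δ_x)f, f ↦ (I+α₋δ_x)f, f ↦ (I+α₊δ_y)f, f ↦ (I+α₋δ_y)f is a bijection of the space of ℂ-valued discrete analytic functions on Λ onto itself. -/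
import Mathlib


open Complex

noncomputable section

/-- The Gaussian integer lattice Λ = ℤ + iℤ. -/
abbrev GI := GaussianInt

/-- The lattice element i. -/
def Ii : GI := ⟨0, 1⟩

/-- The difference operator δ_x. -/
def dx (f : GI → ℂ) : GI → ℂ := fun z => f (z + 1) - f z

/-- The difference operator δ_y. -/
def dy (f : GI → ℂ) : GI → ℂ := fun z => f (z + Ii) - f z

/-- Discrete analyticity on the full lattice Λ. -/
def DA (f : GI → ℂ) : Prop :=
  ∀ z : GI, (f (z + 1 + Ii) - f z) / (1 + I) = (f (z + 1) - f (z + Ii)) / (1 - I)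

/-- α₊ = (1+i)/2. -/
def ap : ℂ := (1 + I) / 2

/-- α₋ = (1−i)/2. -/
def am : ℂ := (1 - I) / 2

/-- `T` is a bijection of the space of ℂ-valued discrete analytic functions on Λ
onto itself: it maps that space into itself, and every discrete analytic function
has a unique discrete analytic preimage. -/
def BijOnDA (T : (GI → ℂ) → (GI → ℂ)) : Prop :=
  (∀ g, DA g → DA (T g)) ∧ ∀ h, DA h → ∃! g : GI → ℂ, DA g ∧ T g = h

/-! ### Auxiliary material -/

lemma onePI_ne : (1 : ℂ) + I ≠ 0 := by
  intro h
  have := congrArg Complex.im h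
  simp at this

lemma oneMI_ne : (1 : ℂ) - I ≠ 0 := by
  intro h
  have := congrArg Complex.im h
  simp at this

lemma rel_of_DA {f : GI → ℂ} (hf : DA f) (z : GI) :
    f (z + 1 + Ii) = f z + I * (f (z + 1) - f (z + Ii)) := by
  have h := hf z
  rw [div_eq_div_iff onePI_ne oneMI_ne] at h
  linear_combination ((1 + I)/2) * h +
    ((f (z + 1 + Ii) - f z + f (z + 1) - f (z + Ii))/2) * Complex.I_mul_I

lemma DA_of_rel {f : GI → ℂ}
    (h : ∀ z : GI, f (z + 1 + Ii) = f z + I * (f (z + 1) - f (z + Ii))) : DA f := by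
  intro z
  rw [div_eq_div_iff onePI_ne oneMI_ne, h z]
  linear_combination (-(f (z+1) - f (z+Ii))) * Complex.I_mul_I

/-- The operator `I + c·δ_x`. -/
def Tx (c : ℂ) (f : GI → ℂ) : GI → ℂ := fun z => f z + c * dx f z

/-- The operator `I + c·δ_y`. -/
def Ty (c : ℂ) (f : GI → ℂ) : GI → ℂ := fun z => f z + c * dy f z

/-- The shift operator. -/
def Sh (w : GI) (f : GI → ℂ) : GI → ℂ := fun z => f (z + w)

lemma DA_Sh (w : GI) {f : GI → ℂ} (hf : DA f) : DA (Sh w f) := by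
  apply DA_of_rel
  intro z
  simp only [Sh]
  rw [show z + 1 + Ii + w = z + w + 1 + Ii from by ring,
      show z + 1 + w = z + w + 1 from by ring,
      show z + Ii + w = z + w + Ii from by ring]
  exact rel_of_DA hf (z + w)

lemma DA_Tx (c : ℂ) {f : GI → ℂ} (hf : DA f) : DA (Tx c f) := by
  apply DA_of_rel
  intro z
  simp only [Tx, dx]
  rw [show z + 1 + Ii + 1 = z + 1 + 1 + Ii from by ring,
      show z + Ii + 1 = z + 1 + Ii from by ring,
      rel_of_DA hf (z + 1), rel_of_DA hf z]
  ring

lemma DA_Ty (c : ℂ) {f : GI → ℂ} (hf : DA f) : DA (Ty c f) := by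
  apply DA_of_rel
  intro z
  have h2 := rel_of_DA hf (z + Ii)
  rw [show z + Ii + 1 = z + 1 + Ii from by ring] at h2
  simp only [Ty, dy]
  rw [h2, rel_of_DA hf z]
  ring

lemma Tx_Sh (c : ℂ) (w : GI) (f : GI → ℂ) : Tx c (Sh w f) = Sh w (Tx c f) := by
  funext z
  simp only [Tx, Sh, dx]
  rw [show z + 1 + w = z + w + 1 from by ring]

lemma Ty_Sh (c : ℂ) (w : GI) (f : GI → ℂ) : Ty c (Sh w f) = Sh w (Ty c f) := by
  funext z
  simp only [Ty, Sh, dy]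
  rw [show z + Ii + w = z + w + Ii from by ring]

lemma Sh_neg_Sh (w : GI) (f : GI → ℂ) : Sh (-w) (Sh w f) = f := by
  funext z
  simp only [Sh]
  rw [show z + -w + w = z from by ring]

lemma Sh_Sh_neg (w : GI) (f : GI → ℂ) : Sh w (Sh (-w) f) = f := by
  funext z
  simp only [Sh]
  rw [show z + w + -w = z from by ring]

/-! ### The pointwise identities -/

lemma id1 {f : GI → ℂ} (hf : DA f) : Tx am (Ty ap f) = f := by
  funext z
  simp only [Tx, Ty, dx, dy, ap, am]
  rw [rel_of_DA hf z]
  linear_combination ((-1/2 : ℂ) * f z + (1/4 - I/4) * f (z+1)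
    + (1/4 + I/4) * f (z+Ii)) * Complex.I_mul_I

lemma id2 {f : GI → ℂ} (hf : DA f) : Ty ap (Tx am f) = f := by
  funext z
  simp only [Tx, Ty, dx, dy, ap, am]
  rw [show z + Ii + 1 = z + 1 + Ii from by ring, rel_of_DA hf z]
  linear_combination ((-1/2 : ℂ) * f z + (1/4 - I/4) * f (z+1)
    + (1/4 + I/4) * f (z+Ii)) * Complex.I_mul_I

lemma id3 {f : GI → ℂ} (hf : DA f) : Tx am (Ty am f) = Sh 1 f := by
  funext z
  simp only [Tx, Ty, Sh, dx, dy, ap, am]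
  rw [rel_of_DA hf z]
  linear_combination ((1/2 : ℂ) * f z + (-3/4 + I/4) * f (z+1)
    + (1/4 - I/4) * f (z+Ii)) * Complex.I_mul_I

lemma id4 {f : GI → ℂ} (hf : DA f) : Tx ap (Ty ap f) = Sh Ii f := by
  funext z
  simp only [Tx, Ty, Sh, dx, dy, ap, am]
  rw [rel_of_DA hf z]
  linear_combination ((1/2 : ℂ) * f z + (1/4 + I/4) * f (z+1)
    + (-3/4 - I/4) * f (z+Ii)) * Complex.I_mul_I

lemma ida {f : GI → ℂ} (hf : DA f) : Ty am (Tx ap f) = Sh (1 + Ii) f := by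
  funext z
  simp only [Tx, Ty, Sh, dx, dy, ap, am]
  rw [show z + Ii + 1 = z + 1 + Ii from by ring,
      show z + (1 + Ii) = z + 1 + Ii from by ring, rel_of_DA hf z]
  linear_combination ((-1/2 : ℂ) * f z + (1/4 - I/4) * f (z+1)
    + (1/4 + I/4) * f (z+Ii)) * Complex.I_mul_I

lemma idb {f : GI → ℂ} (hf : DA f) : Tx ap (Ty am f) = Sh (1 + Ii) f := by
  funext z
  simp only [Tx, Ty, Sh, dx, dy, ap, am]
  rw [show z + (1 + Ii) = z + 1 + Ii from by ring, rel_of_DA hf z]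
  linear_combination ((-1/2 : ℂ) * f z + (1/4 - I/4) * f (z+1)
    + (1/4 + I/4) * f (z+Ii)) * Complex.I_mul_I

/-! ### Bijectivity machinery -/

lemma bij_of_inv (T S : (GI → ℂ) → (GI → ℂ))
    (hT : ∀ g, DA g → DA (T g)) (hS : ∀ g, DA g → DA (S g))
    (hST : ∀ g, DA g → S (T g) = g) (hTS : ∀ g, DA g → T (S g) = g) :
    BijOnDA T :=
  ⟨hT, fun h hh => ⟨S h, ⟨hS h hh, hTS h hh⟩,
    fun g ⟨hg, hgT⟩ => by rw [← hST g hg, hgT]⟩⟩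

lemma BijOnDA_congr {T T' : (GI → ℂ) → (GI → ℂ)} (h : ∀ g, T g = T' g)
    (hT' : BijOnDA T') : BijOnDA T := by
  have : T = T' := funext h
  rwa [this]

lemma bij_Sh (w : GI) : BijOnDA (Sh w) :=
  bij_of_inv (Sh w) (Sh (-w)) (fun g hg => DA_Sh w hg) (fun g hg => DA_Sh (-w) hg)
    (fun g _ => Sh_neg_Sh w g) (fun g _ => Sh_Sh_neg w g)

lemma bij_Tx_ap : BijOnDA (Tx ap) := by
  refine bij_of_inv (Tx ap) (fun h => Sh (-(1 + Ii)) (Ty am h))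
    (fun g hg => DA_Tx ap hg) (fun g hg => DA_Sh _ (DA_Ty am hg)) ?_ ?_
  · intro g hg
    show Sh (-(1 + Ii)) (Ty am (Tx ap g)) = g
    rw [ida hg, Sh_neg_Sh]
  · intro g hg
    show Tx ap (Sh (-(1 + Ii)) (Ty am g)) = g
    rw [Tx_Sh, idb hg, Sh_neg_Sh]

lemma bij_Ty_am : BijOnDA (Ty am) := by
  refine bij_of_inv (Ty am) (fun h => Sh (-(1 + Ii)) (Tx ap h))
    (fun g hg => DA_Ty am hg) (fun g hg => DA_Sh _ (DA_Tx ap hg)) ?_ ?_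
  · intro g hg
    show Sh (-(1 + Ii)) (Tx ap (Ty am g)) = g
    rw [idb hg, Sh_neg_Sh]
  · intro g hg
    show Ty am (Sh (-(1 + Ii)) (Tx ap g)) = g
    rw [Ty_Sh, ida hg, Sh_neg_Sh]

lemma bij_Tx_am : BijOnDA (Tx am) :=
  bij_of_inv (Tx am) (Ty ap) (fun g hg => DA_Tx am hg) (fun g hg => DA_Ty ap hg)
    (fun g hg => id2 hg) (fun g hg => id1 hg)

lemma bij_Ty_ap : BijOnDA (Ty ap) :=
  bij_of_inv (Ty ap) (Tx am) (fun g hg => DA_Ty ap hg) (fun g hg => DA_Tx am hg)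
    (fun g hg => id1 hg) (fun g hg => id2 hg)

/-- the pointwise identities
`(I+α₋δ_x)((I+α₊δ_y)f) = f`, `(I+α₊δ_y)((I+α₋δ_x)f) = f`,
`(I+α₋δ_x)((I+α₋δ_y)f) = (I+δ_x)f`, `(I+α₊δ_x)((I+α₊δ_y)f) = (I+δ_y)f`
for discrete analytic `f`, and the bijectivity of the six operators
`I+δ_x`, `I+δ_y`, `I+α₊δ_x`, `I+α₋δ_x`, `I+α₊δ_y`, `I+α₋δ_y` on the space of
discrete analytic functions on Λ. -/
theorem stmt1 (f : GI → ℂ) (hf : DA f) :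
    (∀ z : GI,
      (fun w => f w + ap * dy f w) z + am * dx (fun w => f w + ap * dy f w) z = f z) ∧
    (∀ z : GI,
      (fun w => f w + am * dx f w) z + ap * dy (fun w => f w + am * dx f w) z = f z) ∧
    (∀ z : GI,
      (fun w => f w + am * dy f w) z + am * dx (fun w => f w + am * dy f w) z
        = f z + dx f z) ∧
    (∀ z : GI,
      (fun w => f w + ap * dy f w) z + ap * dx (fun w => f w + ap * dy f w) z
        = f z + dy f z) ∧
    BijOnDA (fun g z => g z + dx g z) ∧
    BijOnDA (fun g z => g z + dy g z) ∧
    BijOnDA (fun g z => g z + ap * dx g z) ∧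
    BijOnDA (fun g z => g z + am * dx g z) ∧
    BijOnDA (fun g z => g z + ap * dy g z) ∧
    BijOnDA (fun g z => g z + am * dy g z) := by
  refine ⟨fun z => congrFun (id1 hf) z, fun z => congrFun (id2 hf) z, ?_, ?_, ?_, ?_,
    bij_Tx_ap, bij_Tx_am, bij_Ty_ap, bij_Ty_am⟩
  · intro z
    have h := congrFun (id3 hf) z
    simp only [Tx, Ty, Sh, dx, dy] at h ⊢
    rw [h]
    ring
  · intro z
    have h := congrFun (id4 hf) z
    simp only [Tx, Ty, Sh, dx, dy] at h ⊢
    rw [h]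
    ring
  · exact BijOnDA_congr (fun g => funext fun z => by simp only [Sh, dx]; ring) (bij_Sh 1)
  · exact BijOnDA_congr (fun g => funext fun z => by simp only [Sh, dy]; ring) (bij_Sh Ii)

end
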